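/- If f(x) and g(x) are polynomials with positive coefficients and both have log-concave coefficient sequences, then the product f(x)g(x) has a log-concave coefficient sequence. -/

import Mathlib

open Polynomial Finset

def PolyLogConcave (p : Polynomial ℝ) : Prop :=
  ∀ k : ℕ, 1 ≤ k → p.coeff (k - 1) * p.coeff (k + 1) ≤ (p.coeff k) ^ 2

lemma coeff_nonneg' (p : Polynomial ℝ) (hpos : ∀ i ≤ p.natDegree, 0 < p.coeff i) :
    ∀ n, 0 ≤ p.coeff n := by
  intro n
  by_cases h : n ≤ p.natDegree
  · exact (hpos n h).le
  · rw [Polynomial.coeff_eq_zero_of_natDegree_lt (lt_of_not_ge h)]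

lemma ratio_lemma (p : Polynomial ℝ) (hpos : ∀ i ≤ p.natDegree, 0 < p.coeff i)
    (hlc : PolyLogConcave p) :
    ∀ q r : ℕ, 1 ≤ q → q ≤ r → p.coeff (q - 1) * p.coeff (r + 1) ≤ p.coeff q * p.coeff r := by
  intro q r hq hqr
  induction r, hqr using Nat.le_induction with
  | base =>
      have := hlc q hq
      nlinarith [this]
  | succ r hr ih =>
      by_cases hdeg : r + 2 ≤ p.natDegree
      · have h0 : 0 < p.coeff r := hpos r (by omega)
        have h1 : 0 < p.coeff (r + 1) := hpos (r + 1) (by omega)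
        have h2 : p.coeff r * p.coeff (r + 2) ≤ (p.coeff (r + 1)) ^ 2 := by
          have := hlc (r + 1) (by omega)
          simpa using this
        have hq1 : 0 ≤ p.coeff (q - 1) := coeff_nonneg' p hpos _
        have hq0 : 0 < p.coeff q := hpos q (by omega)
        -- want: p.coeff (q-1) * p.coeff (r+2) ≤ p.coeff q * p.coeff (r+1)
        have key : (p.coeff (q - 1) * p.coeff (r + 2)) * (p.coeff (r + 1) * p.coeff r)
            ≤ (p.coeff q * p.coeff (r + 1)) * (p.coeff (r + 1) * p.coeff r) := by
          nlinarith [ih, h2, mul_nonneg hq1 h1.le, coeff_nonneg' p hpos (r+2)]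
        have hpos2 : 0 < p.coeff (r + 1) * p.coeff r := mul_pos h1 h0
        have := (mul_le_mul_iff_of_pos_right hpos2).mp key
        simpa [show r + 1 + 1 = r + 2 from rfl] using this
      · have hz : p.coeff (r + 2) = 0 :=
          Polynomial.coeff_eq_zero_of_natDegree_lt (by omega)
        have : p.coeff (q - 1) * p.coeff (r + 1 + 1) = 0 := by
          rw [show r + 1 + 1 = r + 2 from rfl, hz, mul_zero]
        rw [this]
        exact mul_nonneg (coeff_nonneg' p hpos _) (coeff_nonneg' p hpos _)

lemma cauchy2 (s : Finset ℕ) (x x' y y' : ℕ → ℝ)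
    (h : ∀ i ∈ s, ∀ j ∈ s, 0 ≤ (x i * x' j - x j * x' i) * (y i * y' j - y j * y' i)) :
    (∑ i ∈ s, x i * y' i) * (∑ i ∈ s, x' i * y i) ≤
      (∑ i ∈ s, x i * y i) * (∑ i ∈ s, x' i * y' i) := by
  rw [← sub_nonneg]
  have expand : (∑ i ∈ s, x i * y i) * (∑ i ∈ s, x' i * y' i) -
      (∑ i ∈ s, x i * y' i) * (∑ i ∈ s, x' i * y i)
      = ∑ i ∈ s, ∑ j ∈ s, (x i * x' j) * (y i * y' j - y' i * y j) := by
    rw [Finset.sum_mul_sum, Finset.sum_mul_sum, ← Finset.sum_sub_distrib]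
    refine Finset.sum_congr rfl fun i _ => ?_
    rw [← Finset.sum_sub_distrib]
    refine Finset.sum_congr rfl fun j _ => ?_
    ring
  rw [expand]
  have htwo : (∑ i ∈ s, ∑ j ∈ s, (x i * x' j) * (y i * y' j - y' i * y j)) * 2
      = ∑ i ∈ s, ∑ j ∈ s,
        ((x i * x' j - x j * x' i) * (y i * y' j - y j * y' i)) := by
    have hswap : (∑ i ∈ s, ∑ j ∈ s, (x i * x' j) * (y i * y' j - y' i * y j))
        = ∑ i ∈ s, ∑ j ∈ s, (x j * x' i) * (y j * y' i - y' j * y i) :=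
      Finset.sum_comm
    rw [mul_two]
    nth_rewrite 2 [hswap]
    rw [← Finset.sum_add_distrib]
    refine Finset.sum_congr rfl fun i _ => ?_
    rw [← Finset.sum_add_distrib]
    refine Finset.sum_congr rfl fun j _ => ?_
    ring
  have hsum : 0 ≤ ∑ i ∈ s, ∑ j ∈ s,
      ((x i * x' j - x j * x' i) * (y i * y' j - y j * y' i)) :=
    Finset.sum_nonneg fun i hi => Finset.sum_nonneg fun j hj => h i hi j hj
  nlinarith [htwo, hsum]

theorem stmt2 (f g : Polynomial ℝ)
    (hf_pos : ∀ i ≤ f.natDegree, 0 < f.coeff i)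
    (hg_pos : ∀ i ≤ g.natDegree, 0 < g.coeff i)
    (hf : PolyLogConcave f) (hg : PolyLogConcave g) :
    PolyLogConcave (f * g) := by
  intro k hk
  set a : ℕ → ℝ := fun n => f.coeff n with ha
  set b : ℕ → ℝ := fun n => g.coeff n with hb
  have hann : ∀ n, 0 ≤ a n := coeff_nonneg' f hf_pos
  have hbnn : ∀ n, 0 ≤ b n := coeff_nonneg' g hg_pos
  have hra := ratio_lemma f hf_pos hf
  have hrb := ratio_lemma g hg_pos hg
  -- coefficients of product
  have hC : ∀ n, (f * g).coeff n = ∑ m ∈ Finset.range (n + 1), a (n - m) * b m := by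
    intro n
    rw [mul_comm f g, Polynomial.coeff_mul, Finset.Nat.sum_antidiagonal_eq_sum_range_succ_mk]
    exact Finset.sum_congr rfl fun m _ => mul_comm _ _
  set x : ℕ → ℝ := fun m => if m ≤ k then a (k - m) else 0 with hx
  set x' : ℕ → ℝ := fun m => a (k + 1 - m) with hx'
  set y : ℕ → ℝ := fun m => b m with hy
  set y' : ℕ → ℝ := fun m => if 1 ≤ m then b (m - 1) else 0 with hy'
  set s : Finset ℕ := Finset.range (k + 2) with hs
  have S1 : ∑ i ∈ s, x i * y i = (f * g).coeff k := by
    rw [hC k, hs, Finset.sum_range_succ]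
    simp only [hx, hy]
    rw [if_neg (by omega)]
    rw [zero_mul, add_zero]
    refine Finset.sum_congr rfl fun m hm => ?_
    rw [if_pos (by simp at hm; omega)]
  have S2 : ∑ i ∈ s, x' i * y' i = (f * g).coeff k := by
    rw [hC k, hs, Finset.sum_range_succ']
    simp only [hx', hy']
    rw [if_neg (show ¬ (1:ℕ) ≤ 0 by omega), mul_zero, add_zero]
    refine Finset.sum_congr rfl fun m hm => ?_
    rw [if_pos (show 1 ≤ m + 1 by omega)]
    congr 2 <;> omega
  have S3 : ∑ i ∈ s, x i * y' i = (f * g).coeff (k - 1) := by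
    rw [hC (k - 1), hs, Finset.sum_range_succ, Finset.sum_range_succ']
    simp only [hx, hy']
    rw [if_neg (show ¬ (k + 1 ≤ k) by omega), zero_mul, add_zero]
    rw [if_neg (show ¬ (1:ℕ) ≤ 0 by omega), mul_zero, add_zero]
    rw [show k - 1 + 1 = k from by omega]
    refine Finset.sum_congr rfl fun m hm => ?_
    simp only [Finset.mem_range] at hm
    rw [if_pos (show m + 1 ≤ k by omega), if_pos (show 1 ≤ m + 1 by omega)]
    congr 2 <;> omega
  have S4 : ∑ i ∈ s, x' i * y i = (f * g).coeff (k + 1) := by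
    rw [hC (k + 1), hs]
  have main : ∀ i j : ℕ, j < k + 2 → i ≤ j →
      0 ≤ (x i * x' j - x j * x' i) * (y i * y' j - y j * y' i) := by
    intro i j hj hij
    rcases eq_or_lt_of_le hij with rfl | hlt
    · simp
    have hik : i ≤ k := by omega
    have hDa : 0 ≤ x i * x' j - x j * x' i := by
      by_cases hjk : j ≤ k
      · simp only [hx, hx']
        rw [if_pos hik, if_pos hjk]
        have hr := hra (k + 1 - j) (k - i) (show 1 ≤ k + 1 - j by omega)
          (show k + 1 - j ≤ k - i by omega)
        rw [show k + 1 - j - 1 = k - j from by omega,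
            show k - i + 1 = k + 1 - i from by omega] at hr
        linarith [hr]
      · simp only [hx, hx']
        rw [if_neg hjk, if_pos hik, zero_mul, sub_zero]
        exact mul_nonneg (hann _) (hann _)
    have hDb : 0 ≤ y i * y' j - y j * y' i := by
      by_cases hi0 : 1 ≤ i
      · simp only [hy, hy']
        rw [if_pos (show 1 ≤ j by omega), if_pos hi0]
        have hr := hrb i (j - 1) hi0 (show i ≤ j - 1 by omega)
        rw [show j - 1 + 1 = j from by omega] at hr
        linarith [hr]
      · simp only [hy, hy']
        rw [if_pos (show 1 ≤ j by omega), if_neg hi0, mul_zero, sub_zero]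
        exact mul_nonneg (hbnn _) (hbnn _)
    exact mul_nonneg hDa hDb
  have key := cauchy2 s x x' y y' (by
    intro i hi j hj
    simp only [hs, Finset.mem_range] at hi hj
    rcases le_total i j with hij | hij
    · exact main i j hj hij
    · have e : (x i * x' j - x j * x' i) * (y i * y' j - y j * y' i)
          = (x j * x' i - x i * x' j) * (y j * y' i - y i * y' j) := by ring
      rw [e]
      exact main j i hi hij)
  rw [S1, S2, S3, S4] at key
  calc (f * g).coeff (k - 1) * (f * g).coeff (k + 1) ≤
      (f * g).coeff k * (f * g).coeff k := key
    _ = ((f * g).coeff k) ^ 2 := (sq _).symm
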